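/- Fix integers K ≥ 1 and k with 0 ≤ k ≤ K−1 and reals η_n > 0, q > 0, r > 0, i_max > 0. Let s : {0,…,K} → ℝ and i_n : {0,…,K−1} → ℝ satisfy s(t+1) = s(t) + η_n·i_n(t), i_n(t) ≥ 0, and s(t+1) ≤ 1 for all t ∈ {0,…,K−1}. Let μ_e ≥ 0, i_total > 0, μ_i ≥ 0, μ̄_i ≥ 0, μ̄_s ≥ 0 be reals with i_n(k) < i_max and μ̄_i·(i_n(k) − i_max) = 0, let I ∈ {0,1}, and suppose the stationarity identity 2·μ_e·i_total = η_n·(2q·∑_{t=k+1}^{K} (1 − s(t)) + I·μ̄_s) + μ_i − 2r·i_n(k) − μ̄_i holds. Define M = (q/r)·η_n². If s(k+1) < (M + s(0))/(M + 1), then μ_e > 0. -/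

import Mathlib

/-- The `r > 0` case of the core step of Theorem 1: with positive charge-rate
penalty `r` and the EV throttled at timestep `k`, if the state of charge at time
`k+1` is strictly below `(M + s 0)/(M + 1)` with `M = (q/r)·ηn²`, then the
multiplier `μe` of the relaxed quadratic constraint is strictly positive. -/
theorem socp_tightness_core_r_pos
    (K k : ℕ) (hK : 1 ≤ K) (hk : k ≤ K - 1)
    (ηn q r i_max : ℝ) (hηn : 0 < ηn) (hq : 0 < q) (hr : 0 < r)
    (himax : 0 < i_max)
    (s iN : ℕ → ℝ)
    (hdyn : ∀ t, t ≤ K - 1 → s (t + 1) = s t + ηn * iN t)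
    (hiN : ∀ t, t ≤ K - 1 → 0 ≤ iN t)
    (hs1 : ∀ t, t ≤ K - 1 → s (t + 1) ≤ 1)
    (μe i_total μ_i μbar_i μbar_s I : ℝ)
    (hμe : 0 ≤ μe) (hitot : 0 < i_total) (hμ_i : 0 ≤ μ_i)
    (hμbar_i : 0 ≤ μbar_i) (hμbar_s : 0 ≤ μbar_s)
    (hI : I = 0 ∨ I = 1)
    (hthrottle : iN k < i_max)
    (hcs_i : μbar_i * (iN k - i_max) = 0)
    (hstat : 2 * μe * i_total =
      ηn * (2 * q * (∑ t ∈ Finset.Icc (k + 1) K, (1 - s t)) + I * μbar_s)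
        + μ_i - 2 * r * iN k - μbar_i)
    (hsoc : s (k + 1) < ((q / r) * ηn ^ 2 + s 0) / ((q / r) * ηn ^ 2 + 1)) :
    0 < μe := by
  -- μbar_i = 0 since iN k < i_max
  have hbi0 : μbar_i = 0 := by
    rcases mul_eq_zero.mp hcs_i with h | h
    · exact h
    · nlinarith
  -- s is nondecreasing up to index k
  have hmono : ∀ m, m ≤ k → s 0 ≤ s m := by
    intro m hm
    induction m with
    | zero => exact le_rfl
    | succ n ih =>
      have hn : n ≤ K - 1 := le_trans (le_trans (Nat.le_succ n) hm) hk
      have := hdyn n hn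
      have h2 := hiN n hn
      have := ih (le_trans (Nat.le_succ n) hm)
      nlinarith
  have hs0k : s 0 ≤ s k := hmono k le_rfl
  -- sum lower bound
  have hkK : k + 1 ≤ K := by omega
  have hmem : k + 1 ∈ Finset.Icc (k + 1) K := Finset.mem_Icc.mpr ⟨le_rfl, hkK⟩
  have hsum : (1 - s (k + 1)) ≤ ∑ t ∈ Finset.Icc (k + 1) K, (1 - s t) := by
    apply Finset.single_le_sum (f := fun t => 1 - s t) _ hmem
    intro t ht
    rcases Finset.mem_Icc.mp ht with ⟨h1, h2⟩
    obtain ⟨u, rfl⟩ : ∃ u, t = u + 1 := ⟨t - 1, by omega⟩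
    have hu : u ≤ K - 1 := by omega
    have := hs1 u hu
    show (0:ℝ) ≤ 1 - s (u + 1)
    linarith
  -- ηn * iN k = s (k+1) - s k ≤ s (k+1) - s 0
  have hdynk := hdyn k hk
  have hiNk : ηn * iN k ≤ s (k + 1) - s 0 := by linarith
  -- from hsoc: ((q/r)*ηn^2 + 1) * s(k+1) < (q/r)*ηn^2 + s 0
  have hM : (0:ℝ) < (q / r) * ηn ^ 2 + 1 := by positivity
  have hsoc' : s (k + 1) * (q * ηn ^ 2 + r) < q * ηn ^ 2 + r * s 0 := by
    have h := (lt_div_iff₀ hM).mp hsoc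
    have h' := mul_lt_mul_of_pos_left h hr
    have e : r * (s (k + 1) * ((q / r) * ηn ^ 2 + 1)) = s (k + 1) * (q * ηn ^ 2 + r) := by
      field_simp; try ring
    have e2 : r * ((q / r) * ηn ^ 2 + s 0) = q * ηn ^ 2 + r * s 0 := by
      field_simp; try ring
    rw [e, e2] at h'
    exact h'
  -- key positivity: 2*q*ηn*(1 - s(k+1)) - 2*r*iN k > 0
  have hIμ : 0 ≤ I * μbar_s := by
    rcases hI with h | h <;> simp [h] <;> linarith
  have hkey : 0 < 2 * μe * i_total := by
    rw [hstat, hbi0]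
    have h1 : ηn * (2 * q * (1 - s (k + 1))) ≤
        ηn * (2 * q * (∑ t ∈ Finset.Icc (k + 1) K, (1 - s t))) := by
      apply mul_le_mul_of_nonneg_left _ hηn.le
      exact mul_le_mul_of_nonneg_left hsum (by positivity)
    have h2 : r * (ηn * iN k) ≤ r * (s (k + 1) - s 0) :=
      mul_le_mul_of_nonneg_left hiNk hr.le
    have hrn : 0 < r * ηn := by positivity
    -- multiply hsoc' by r : q*ηn^2*(1 - s(k+1)) - r*(s(k+1) - s 0) > 0
    have h3 : 0 < q * ηn ^ 2 * (1 - s (k + 1)) - r * (s (k + 1) - s 0) := by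
      nlinarith
    nlinarith
  nlinarith
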